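/- arXiv:2104.14803 — 2 statements merged into one kernel-verified Lean document; each statement's English description precedes it below -/
import Mathlib

section
/- Let d ≥ 1 and T > 0. Let θˢ : ℝ × ℝ^d → ℝ be C² and ψˢ : ℝ × ℝ^d → ℝ be C¹, set vˢ = ∇ₓθˢ, and assume the Hamilton–Jacobi equation ∂ₜθˢ + |∇ₓθˢ|²/2 + ψˢ = 0 holds everywhere. Define A(t,x) = (t − T)·vˢ(t,x) and θ(t,x) = (t − T)·(ψˢ(t,x) − |vˢ(t,x)|²/2). Then for every (t,x): (I − ∇ₓA − (∇ₓA)ᵀ)(t,x) · vˢ(t,x) = ∂ₜA(t,x) + ∇ₓθ(t,x). -/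
/-- Spatial partial derivative `∂f/∂xᵢ` of a function `f : ℝ^d → ℝ`. -/
noncomputable def pdx (d : ℕ) (f : (Fin d → ℝ) → ℝ) (x : Fin d → ℝ) (i : Fin d) : ℝ :=
  fderiv ℝ f x (Pi.single i 1)

/-- If `θˢ` is C², `ψˢ` is C¹, `vˢ = ∇ₓθˢ` satisfies the Hamilton–Jacobi equation
`∂ₜθˢ + |∇ₓθˢ|²/2 + ψˢ = 0`, and we define the dual ansatz `A = (t-T)vˢ` and
`θ = (t-T)(ψˢ - |vˢ|²/2)`, then `(I - ∇ₓA - (∇ₓA)ᵀ)·vˢ = ∂ₜA + ∇ₓθ` holds everywhere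
(stated componentwise). -/
theorem stmt6 (d : ℕ) (hd : 1 ≤ d) (T : ℝ) (hT : 0 < T)
    (θs : ℝ × (Fin d → ℝ) → ℝ) (ψs : ℝ × (Fin d → ℝ) → ℝ)
    (hθs : ContDiff ℝ 2 θs) (hψs : ContDiff ℝ 1 ψs)
    (vs : ℝ → (Fin d → ℝ) → Fin d → ℝ)
    (hvs : ∀ t x i, vs t x i = pdx d (fun y => θs (t, y)) x i)
    (hHJ : ∀ t x, deriv (fun s => θs (s, x)) t
        + (∑ j, (vs t x j) ^ 2) / 2 + ψs (t, x) = 0)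
    (A : ℝ → (Fin d → ℝ) → Fin d → ℝ)
    (hA : ∀ t x i, A t x i = (t - T) * vs t x i)
    (θ : ℝ → (Fin d → ℝ) → ℝ)
    (hθ : ∀ t x, θ t x = (t - T) * (ψs (t, x) - (∑ j, (vs t x j) ^ 2) / 2)) :
    ∀ (t : ℝ) (x : Fin d → ℝ) (i : Fin d),
      vs t x i
        - ∑ j, (pdx d (fun y => A t y i) x j + pdx d (fun y => A t y j) x i) * vs t x j
      = deriv (fun s => A s x i) t + pdx d (θ t) x i := by
  intro t x i
  classical
  have hθd : Differentiable ℝ θs := hθs.differentiable (by norm_num)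
  have hψd : Differentiable ℝ ψs := hψs.differentiable (by norm_num)
  have hF : ContDiff ℝ 1 (fderiv ℝ θs) := hθs.fderiv_right (by norm_num)
  have hFd : Differentiable ℝ (fderiv ℝ θs) := hF.differentiable (by norm_num)
  set F : ℝ × (Fin d → ℝ) → (ℝ × (Fin d → ℝ)) →L[ℝ] ℝ := fderiv ℝ θs with hFdef
  set H : (ℝ × (Fin d → ℝ)) →L[ℝ] (ℝ × (Fin d → ℝ)) →L[ℝ] ℝ := fderiv ℝ F (t, x) with hHdef
  have hsymm : ∀ u w, H u w = H w u := fun u w =>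
    (hθs.contDiffAt.isSymmSndFDerivAt (by norm_num)) u w
  -- spatial injection derivatives
  have hinj : ∀ (s : ℝ) (y : Fin d → ℝ), HasFDerivAt (fun z : Fin d → ℝ => (s, z))
      (ContinuousLinearMap.inr ℝ ℝ (Fin d → ℝ)) y := fun s y =>
    hasFDerivAt_prodMk_right s y
  -- v in terms of F
  have hvF : ∀ (s : ℝ) (y : Fin d → ℝ) (j : Fin d),
      vs s y j = F (s, y) (0, Pi.single j 1) := by
    intro s y j
    rw [hvs, pdx]
    have h : HasFDerivAt (fun z => θs (s, z))
        ((F (s, y)).comp (ContinuousLinearMap.inr ℝ ℝ (Fin d → ℝ))) y :=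
      (hθd (s, y)).hasFDerivAt.comp y (hinj s y)
    rw [h.fderiv]
    simp
  -- time derivative of θs
  have hderivθ : ∀ (s : ℝ) (y : Fin d → ℝ),
      HasDerivAt (fun s' => θs (s', y)) (F (s, y) (1, 0)) s := by
    intro s y
    have h := (hθd (s, y)).hasFDerivAt.comp_hasDerivAt s
      ((hasDerivAt_id s).prodMk (hasDerivAt_const s y))
    simpa [Function.comp_def] using h
  -- evaluation composed with F has a derivative at (t,x)
  have hFapp : ∀ u : ℝ × (Fin d → ℝ), HasFDerivAt (fun q => F q u)
      ((ContinuousLinearMap.apply ℝ ℝ u).comp H) (t, x) := fun u =>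
    (ContinuousLinearMap.apply ℝ ℝ u).hasFDerivAt.comp (t, x) (hFd (t, x)).hasFDerivAt
  -- time derivative of s ↦ F (s,x) u at t
  have hti : ∀ u : ℝ × (Fin d → ℝ),
      HasDerivAt (fun s => F (s, x) u) (H (1, 0) u) t := by
    intro u
    have h := (hFapp u).comp_hasDerivAt t ((hasDerivAt_id t).prodMk (hasDerivAt_const t x))
    simpa [Function.comp_def] using h
  -- spatial derivative pieces at x
  have hsp : ∀ u : ℝ × (Fin d → ℝ), HasFDerivAt (fun y => F (t, y) u)
      (((ContinuousLinearMap.apply ℝ ℝ u).comp H).comp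
        (ContinuousLinearMap.inr ℝ ℝ (Fin d → ℝ))) x := fun u =>
    (hFapp u).comp x (hinj t x)
  set L : (ℝ × (Fin d → ℝ)) → (Fin d → ℝ) →L[ℝ] ℝ := fun u =>
    ((ContinuousLinearMap.apply ℝ ℝ u).comp H).comp
        (ContinuousLinearMap.inr ℝ ℝ (Fin d → ℝ)) with hLdef
  have hLapp : ∀ (u : ℝ × (Fin d → ℝ)) (j : Fin d),
      L u (Pi.single j 1) = H (0, Pi.single j 1) u := by
    intro u j
    simp [hLdef]
  -- Hamilton-Jacobi rewritten via F
  have hG0 : ∀ (s : ℝ) (y : Fin d → ℝ),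
      F (s, y) (1, 0) + (∑ j, (F (s, y) (0, Pi.single j 1)) ^ 2) / 2 + ψs (s, y) = 0 := by
    intro s y
    have h := hHJ s y
    rw [(hderivθ s y).deriv] at h
    simpa only [hvF] using h
  -- derivative of the sum of squares term
  have hg2 : HasFDerivAt (fun y => (∑ j, (F (t, y) (0, Pi.single j 1)) ^ 2) / 2)
      ((2⁻¹ : ℝ) • ∑ j, (F (t, x) (0, Pi.single j 1) • L (0, Pi.single j 1) +
          F (t, x) (0, Pi.single j 1) • L (0, Pi.single j 1))) x := by
    have hsum : HasFDerivAt (fun y => ∑ j, (F (t, y) (0, Pi.single j 1)) ^ 2)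
        (∑ j, (F (t, x) (0, Pi.single j 1) • L (0, Pi.single j 1) +
          F (t, x) (0, Pi.single j 1) • L (0, Pi.single j 1))) x := by
      apply HasFDerivAt.fun_sum
      intro j _
      have h := (hsp (0, Pi.single j 1)).fun_mul (hsp (0, Pi.single j 1))
      simpa [sq] using h
    have h := hsum.const_mul (2⁻¹ : ℝ)
    have heq : (fun y => (∑ j, (F (t, y) (0, Pi.single j 1)) ^ 2) / 2)
        = fun y => (2⁻¹ : ℝ) * ∑ j, (F (t, y) (0, Pi.single j 1)) ^ 2 := by
      funext y; ring
    rw [heq]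
    exact h
  have hg3 : HasFDerivAt (fun y => ψs (t, y))
      ((fderiv ℝ ψs (t, x)).comp (ContinuousLinearMap.inr ℝ ℝ (Fin d → ℝ))) x :=
    (hψd (t, x)).hasFDerivAt.comp x (hinj t x)
  -- total spatial derivative of the HJ expression is zero
  have htot := ((hsp (1, 0)).fun_add hg2).fun_add hg3
  have hzero : (fun y => F (t, y) (1, 0) +
      (∑ j, (F (t, y) (0, Pi.single j 1)) ^ 2) / 2 + ψs (t, y)) = fun _ => (0 : ℝ) :=
    funext fun y => hG0 t y
  rw [hzero] at htot
  have hL0 := htot.unique (hasFDerivAt_const 0 x)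
  have hHJi : H (0, Pi.single i 1) (1, 0)
      + 2⁻¹ * (∑ j, (F (t, x) (0, Pi.single j 1) * H (0, Pi.single i 1) (0, Pi.single j 1) +
          F (t, x) (0, Pi.single j 1) * H (0, Pi.single i 1) (0, Pi.single j 1)))
      + fderiv ℝ ψs (t, x) (0, Pi.single i 1) = 0 := by
    have h := congrArg (fun (M : (Fin d → ℝ) →L[ℝ] ℝ) => M (Pi.single i 1)) hL0
    simpa [ContinuousLinearMap.sum_apply, hLapp] using h
  -- (a) spatial derivatives of A
  have hAx : ∀ j k : Fin d, pdx d (fun y => A t y k) x j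
      = (t - T) * H (0, Pi.single j 1) (0, Pi.single k 1) := by
    intro j k
    have hfun : (fun y => A t y k) = fun y => (t - T) * F (t, y) (0, Pi.single k 1) :=
      funext fun y => by rw [hA, hvF]
    rw [pdx, hfun]
    have h := (hsp (0, Pi.single k 1)).const_mul (t - T)
    rw [h.fderiv]
    simp
  -- (b) time derivative of A
  have hAt : deriv (fun s => A s x i) t
      = vs t x i + (t - T) * H (1, 0) (0, Pi.single i 1) := by
    have hfun : (fun s => A s x i) = fun s => (s - T) * F (s, x) (0, Pi.single i 1) :=
      funext fun s => by rw [hA, hvF]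
    rw [hfun]
    have h : HasDerivAt (fun s => (s - T) * F (s, x) (0, Pi.single i 1))
        (1 * F (t, x) (0, Pi.single i 1) + (t - T) * H (1, 0) (0, Pi.single i 1)) t :=
      ((hasDerivAt_id t).sub_const T).mul (hti (0, Pi.single i 1))
    rw [h.deriv, hvF]
    ring
  -- (c) spatial derivative of θ
  have hθx : pdx d (θ t) x i
      = (t - T) * (fderiv ℝ ψs (t, x) (0, Pi.single i 1)
        - 2⁻¹ * ∑ j, (F (t, x) (0, Pi.single j 1) * H (0, Pi.single i 1) (0, Pi.single j 1) +
          F (t, x) (0, Pi.single j 1) * H (0, Pi.single i 1) (0, Pi.single j 1))) := by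
    have hfun : θ t = fun y => (t - T) *
        (ψs (t, y) - (∑ j, (F (t, y) (0, Pi.single j 1)) ^ 2) / 2) :=
      funext fun y => by rw [hθ]; simp only [hvF]
    rw [pdx, hfun]
    have h := (hg3.fun_sub hg2).const_mul (t - T)
    rw [h.fderiv]
    simp [ContinuousLinearMap.sum_apply, hLapp]
  -- final algebra
  rw [hAt, hθx]
  have hsum1 : ∑ j, (pdx d (fun y => A t y i) x j + pdx d (fun y => A t y j) x i) * vs t x j
      = 2 * (t - T) * ∑ j, F (t, x) (0, Pi.single j 1)
          * H (0, Pi.single i 1) (0, Pi.single j 1) := by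
    rw [Finset.mul_sum]
    refine Finset.sum_congr rfl fun j _ => ?_
    rw [hAx, hAx, hsymm (0, Pi.single j 1) (0, Pi.single i 1), hvF]
    ring
  rw [hsum1]
  have hsum2 : (∑ j, (F (t, x) (0, Pi.single j 1) * H (0, Pi.single i 1) (0, Pi.single j 1) +
      F (t, x) (0, Pi.single j 1) * H (0, Pi.single i 1) (0, Pi.single j 1)))
      = 2 * ∑ j, F (t, x) (0, Pi.single j 1) * H (0, Pi.single i 1) (0, Pi.single j 1) := by
    rw [Finset.mul_sum]
    exact Finset.sum_congr rfl fun j _ => by ring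
  rw [hsum2] at hHJi ⊢
  have e1 : H (1, 0) (0, Pi.single i 1) = H (0, Pi.single i 1) (1, 0) := hsymm _ _
  rw [e1]
  set S := ∑ j, F (t, x) (0, Pi.single j 1) * H (0, Pi.single i 1) (0, Pi.single j 1)
  have hP : fderiv ℝ ψs (t, x) (0, Pi.single i 1) = -H (0, Pi.single i 1) (1, 0) - S := by
    linarith
  rw [hP]
  ring
end

section
/- Let d ≥ 1. Let c : ℝ × ℝ^d → ℝ be C¹, θ : ℝ × ℝ^d → ℝ be C², and ψ : ℝ × ℝ^d → ℝ be C¹, and assume the continuity equation ∂ₜc + ∇ₓ·(c∇ₓθ) = 0 and the Hamilton–Jacobi equation ∂ₜθ + |∇ₓθ|²/2 + ψ = 0 hold everywhere. Then the pressure-less momentum equation ∂ₜ(c∇ₓθ) + ∇ₓ·(c ∇ₓθ ⊗ ∇ₓθ) = −c∇ₓψ holds everywhere, where the divergence of the matrix field c∇ₓθ⊗∇ₓθ is taken row-wise: (∇ₓ·(c∇ₓθ⊗∇ₓθ))_i = Σ_j ∂_{x_j}(c ∂_{x_i}θ ∂_{x_j}θ). -/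
lemma pdx_slice {d : ℕ} (f : ℝ × (Fin d → ℝ) → ℝ) (t : ℝ) (x : Fin d → ℝ)
    (hf : DifferentiableAt ℝ f (t, x)) (j : Fin d) :
    pdx d (fun y => f (t, y)) x j = fderiv ℝ f (t, x) (0, Pi.single j 1) := by
  have h : HasFDerivAt (fun y => f (t, y))
      ((fderiv ℝ f (t, x)).comp (ContinuousLinearMap.inr ℝ ℝ (Fin d → ℝ))) x :=
    hf.hasFDerivAt.comp x (hasFDerivAt_prodMk_right t x)
  rw [pdx, h.fderiv]
  rfl

lemma deriv_slice {d : ℕ} (f : ℝ × (Fin d → ℝ) → ℝ) (t : ℝ) (x : Fin d → ℝ)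
    (hf : DifferentiableAt ℝ f (t, x)) :
    deriv (fun s => f (s, x)) t = fderiv ℝ f (t, x) (1, 0) := by
  have h : HasFDerivAt (fun s : ℝ => f (s, x))
      ((fderiv ℝ f (t, x)).comp (ContinuousLinearMap.inl ℝ ℝ (Fin d → ℝ))) t :=
    hf.hasFDerivAt.comp t (hasFDerivAt_prodMk_left t x)
  rw [h.hasDerivAt.deriv]
  rfl


/-- If `c` is C¹, `θ` is C², `ψ` is C¹, and the continuity equation
`∂ₜc + ∇ₓ·(c∇ₓθ) = 0` together with the Hamilton–Jacobi equation
`∂ₜθ + |∇ₓθ|²/2 + ψ = 0` hold everywhere, then the pressure-less momentum equation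
`∂ₜ(c∇ₓθ) + ∇ₓ·(c∇ₓθ⊗∇ₓθ) = -c∇ₓψ` holds everywhere (row-wise divergence). -/
theorem stmt8 (d : ℕ) (hd : 1 ≤ d)
    (c θ ψ : ℝ × (Fin d → ℝ) → ℝ)
    (hc : ContDiff ℝ 1 c) (hθ : ContDiff ℝ 2 θ) (hψ : ContDiff ℝ 1 ψ)
    (hcont : ∀ (t : ℝ) (x : Fin d → ℝ),
      deriv (fun s => c (s, x)) t
        + ∑ j, pdx d (fun y => c (t, y) * pdx d (fun z => θ (t, z)) y j) x j = 0)
    (hHJ : ∀ (t : ℝ) (x : Fin d → ℝ),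
      deriv (fun s => θ (s, x)) t
        + (∑ j, (pdx d (fun z => θ (t, z)) x j) ^ 2) / 2 + ψ (t, x) = 0) :
    ∀ (t : ℝ) (x : Fin d → ℝ) (i : Fin d),
      deriv (fun s => c (s, x) * pdx d (fun z => θ (s, z)) x i) t
        + ∑ j, pdx d
            (fun y => c (t, y) * pdx d (fun z => θ (t, z)) y i
              * pdx d (fun z => θ (t, z)) y j) x j
      = - c (t, x) * pdx d (fun y => ψ (t, y)) x i := by
  intro t x i
  have hc1 : Differentiable ℝ c := hc.differentiable one_ne_zero
  have hψ1 : Differentiable ℝ ψ := hψ.differentiable one_ne_zero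
  have hθ1 : Differentiable ℝ θ := hθ.differentiable two_ne_zero
  have hθ'1 : Differentiable ℝ (fderiv ℝ θ) :=
    (hθ.fderiv_right (le_refl 2)).differentiable one_ne_zero
  -- derivative of a directional derivative of θ
  have hD2 : ∀ (p w : ℝ × (Fin d → ℝ)),
      HasFDerivAt (fun q => fderiv ℝ θ q w) ((fderiv ℝ (fderiv ℝ θ) p).flip w) p := by
    intro p w
    simpa using (hθ'1 p).hasFDerivAt.clm_apply (hasFDerivAt_const w p)
  -- rewrite inner pdx of θ slices
  have hv : ∀ (s : ℝ) (y : Fin d → ℝ) (k : Fin d),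
      pdx d (fun z => θ (s, z)) y k = fderiv ℝ θ (s, y) (0, Pi.single k 1) :=
    fun s y k => pdx_slice θ s y (hθ1 _) k
  set p : ℝ × (Fin d → ℝ) := (t, x) with hp
  -- symmetry of second derivatives
  have hsymm : ∀ v w, fderiv ℝ (fderiv ℝ θ) p v w = fderiv ℝ (fderiv ℝ θ) p w v :=
    fun v w => (hθ.contDiffAt.isSymmSndFDerivAt (by norm_num)).eq v w
  -- fderiv of c * Dθ
  have key1 : ∀ (w u : ℝ × (Fin d → ℝ)),
      fderiv ℝ (fun q => c q * fderiv ℝ θ q w) p u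
        = fderiv ℝ c p u * fderiv ℝ θ p w + c p * fderiv ℝ (fderiv ℝ θ) p u w := by
    intro w u
    rw [((hc1 p).hasFDerivAt.fun_mul (hD2 p w)).fderiv]
    simp [ContinuousLinearMap.flip_apply]
    ring
  have key2 : ∀ (w₁ w₂ u : ℝ × (Fin d → ℝ)),
      fderiv ℝ (fun q => c q * fderiv ℝ θ q w₁ * fderiv ℝ θ q w₂) p u
        = fderiv ℝ c p u * fderiv ℝ θ p w₁ * fderiv ℝ θ p w₂
          + c p * fderiv ℝ (fderiv ℝ θ) p u w₁ * fderiv ℝ θ p w₂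
          + c p * fderiv ℝ θ p w₁ * fderiv ℝ (fderiv ℝ θ) p u w₂ := by
    intro w₁ w₂ u
    rw [(((hc1 p).hasFDerivAt.fun_mul (hD2 p w₁)).fun_mul (hD2 p w₂)).fderiv]
    simp [ContinuousLinearMap.flip_apply]
    ring
  -- continuity equation at p
  have hcont' : fderiv ℝ c p (1, 0)
      + ∑ j, (fderiv ℝ c p (0, Pi.single j 1) * fderiv ℝ θ p (0, Pi.single j 1)
          + c p * fderiv ℝ (fderiv ℝ θ) p (0, Pi.single j 1) (0, Pi.single j 1)) = 0 := by
    have h := hcont t x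
    simp only [hv] at h
    rw [deriv_slice c t x (hc1 _)] at h
    rw [Finset.sum_congr rfl (fun j _ => ?_)] at h
    · exact h
    · show pdx d (fun y => c (t, y) * fderiv ℝ θ (t, y) (0, Pi.single j 1)) x j = _
      rw [pdx_slice (fun q => c q * fderiv ℝ θ q (0, Pi.single j 1)) t x
        ((hc1 _).mul (hD2 _ _).differentiableAt) j, key1]
  -- HJ equation (times 2) everywhere
  have hF : ∀ q : ℝ × (Fin d → ℝ),
      2 * fderiv ℝ θ q (1, (0 : Fin d → ℝ))
        + ∑ j, (fderiv ℝ θ q (0, Pi.single j 1)) ^ 2 + 2 * ψ q = 0 := by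
    rintro ⟨s, y⟩
    have h := hHJ s y
    simp only [hv] at h
    rw [deriv_slice θ s y (hθ1 _)] at h
    linarith
  have hFsum : HasFDerivAt
      (fun q : ℝ × (Fin d → ℝ) => ∑ j, (fderiv ℝ θ q (0, Pi.single j 1)) ^ 2)
      (∑ j, (2 * fderiv ℝ θ p (0, Pi.single j 1))
        • ((fderiv ℝ (fderiv ℝ θ) p).flip (0, Pi.single j 1))) p := by
    apply HasFDerivAt.fun_sum
    intro j _
    have h := (hD2 p (0, Pi.single j 1)).fun_mul (hD2 p (0, Pi.single j 1))
    have e : (2 * fderiv ℝ θ p (0, Pi.single j 1))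
        • ((fderiv ℝ (fderiv ℝ θ) p).flip (0, Pi.single j 1))
        = fderiv ℝ θ p (0, Pi.single j 1)
            • ((fderiv ℝ (fderiv ℝ θ) p).flip (0, Pi.single j 1))
          + fderiv ℝ θ p (0, Pi.single j 1)
            • ((fderiv ℝ (fderiv ℝ θ) p).flip (0, Pi.single j 1)) := by
      rw [two_mul, add_smul]
    rw [e]
    exact h.congr_fderiv rfl |>.congr_of_eventuallyEq (by filter_upwards with q; rw [sq])
  have hF' : HasFDerivAt
      (fun q : ℝ × (Fin d → ℝ) =>
        2 * fderiv ℝ θ q (1, (0 : Fin d → ℝ))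
          + ∑ j, (fderiv ℝ θ q (0, Pi.single j 1)) ^ 2 + 2 * ψ q)
      ((2 : ℝ) • ((fderiv ℝ (fderiv ℝ θ) p).flip (1, (0 : Fin d → ℝ)))
        + ∑ j, (2 * fderiv ℝ θ p (0, Pi.single j 1))
            • ((fderiv ℝ (fderiv ℝ θ) p).flip (0, Pi.single j 1))
        + (2 : ℝ) • fderiv ℝ ψ p) p :=
    (((hD2 p (1, 0)).const_mul 2).add hFsum).add ((hψ1 p).hasFDerivAt.const_mul 2)
  have hFzero : HasFDerivAt
      (fun q : ℝ × (Fin d → ℝ) =>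
        2 * fderiv ℝ θ q (1, (0 : Fin d → ℝ))
          + ∑ j, (fderiv ℝ θ q (0, Pi.single j 1)) ^ 2 + 2 * ψ q)
      (0 : (ℝ × (Fin d → ℝ)) →L[ℝ] ℝ) p := by
    have heq : (fun q : ℝ × (Fin d → ℝ) =>
        2 * fderiv ℝ θ q (1, (0 : Fin d → ℝ))
          + ∑ j, (fderiv ℝ θ q (0, Pi.single j 1)) ^ 2 + 2 * ψ q)
        = fun _ => (0 : ℝ) := funext hF
    rw [heq]
    exact hasFDerivAt_const 0 p
  have hL := hF'.unique hFzero
  have hHJ' : fderiv ℝ (fderiv ℝ θ) p (0, Pi.single i 1) (1, 0)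
      + ∑ j, fderiv ℝ θ p (0, Pi.single j 1)
          * fderiv ℝ (fderiv ℝ θ) p (0, Pi.single i 1) (0, Pi.single j 1)
      + fderiv ℝ ψ p (0, Pi.single i 1) = 0 := by
    have h := congrArg (fun L : (ℝ × (Fin d → ℝ)) →L[ℝ] ℝ => L (0, Pi.single i 1)) hL
    simp only [ContinuousLinearMap.add_apply, ContinuousLinearMap.smul_apply,
      ContinuousLinearMap.sum_apply, ContinuousLinearMap.flip_apply,
      ContinuousLinearMap.zero_apply, smul_eq_mul] at h
    have hs : ∑ j, 2 * fderiv ℝ θ p (0, Pi.single j 1)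
          * fderiv ℝ (fderiv ℝ θ) p (0, Pi.single i 1) (0, Pi.single j 1)
        = 2 * ∑ j, fderiv ℝ θ p (0, Pi.single j 1)
          * fderiv ℝ (fderiv ℝ θ) p (0, Pi.single i 1) (0, Pi.single j 1) := by
      rw [Finset.mul_sum]; exact Finset.sum_congr rfl fun j _ => by ring
    rw [hs] at h
    linarith
  -- rewrite the goal
  simp only [hv]
  rw [deriv_slice (fun q => c q * fderiv ℝ θ q (0, Pi.single i 1)) t x
    ((hc1 _).mul (hD2 _ _).differentiableAt)]
  rw [pdx_slice ψ t x (hψ1 _) i]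
  rw [Finset.sum_congr rfl (fun j _ => ?_)]
  · rw [key1]
    have hsum2 : ∑ j, (fderiv ℝ c p (0, Pi.single j 1) * fderiv ℝ θ p (0, Pi.single i 1)
            * fderiv ℝ θ p (0, Pi.single j 1)
          + c p * fderiv ℝ (fderiv ℝ θ) p (0, Pi.single j 1) (0, Pi.single i 1)
            * fderiv ℝ θ p (0, Pi.single j 1)
          + c p * fderiv ℝ θ p (0, Pi.single i 1)
            * fderiv ℝ (fderiv ℝ θ) p (0, Pi.single j 1) (0, Pi.single j 1))
        = fderiv ℝ θ p (0, Pi.single i 1)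
            * ∑ j, (fderiv ℝ c p (0, Pi.single j 1) * fderiv ℝ θ p (0, Pi.single j 1)
              + c p * fderiv ℝ (fderiv ℝ θ) p (0, Pi.single j 1) (0, Pi.single j 1))
          + c p * ∑ j, fderiv ℝ θ p (0, Pi.single j 1)
              * fderiv ℝ (fderiv ℝ θ) p (0, Pi.single i 1) (0, Pi.single j 1) := by
      rw [Finset.mul_sum, Finset.mul_sum, ← Finset.sum_add_distrib]
      refine Finset.sum_congr rfl fun j _ => ?_
      rw [hsymm (0, Pi.single j 1) (0, Pi.single i 1)]
      ring
    rw [hsum2, hsymm (1, 0) (0, Pi.single i 1)]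
    linear_combination fderiv ℝ θ p (0, Pi.single i 1) * hcont' + c p * hHJ'
  · show pdx d (fun y => c (t, y) * fderiv ℝ θ (t, y) (0, Pi.single i 1)
        * fderiv ℝ θ (t, y) (0, Pi.single j 1)) x j = _
    rw [pdx_slice (fun q => c q * fderiv ℝ θ q (0, Pi.single i 1)
        * fderiv ℝ θ q (0, Pi.single j 1)) t x
      (((hc1 _).mul (hD2 _ _).differentiableAt).mul (hD2 _ _).differentiableAt) j, key2]
end
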